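/- Let (a,b) be a fictitious-play trajectory. Suppose β_t is not an integer for some round t, and let τ > t be the first round after t such that β_t·β_τ ≤ 0 (i.e. β_τ is zero or has the opposite sign of β_t). Then ρ_τ ≥ ⌊ρ_t⌋ + 1. -/
import Mathlib


open MeasureTheory

/-- Bob's choice of the left or right piece. -/
inductive Choice
  | L
  | R
deriving DecidableEq

/-- The cumulative valuation `V(x) = ∫_0^x v`. -/
noncomputable def cumul (v : ℝ → ℝ) (x : ℝ) : ℝ := ∫ y in (0:ℝ)..x, v y

/-- `v` is an integrable value density on `[0,1]`, bounded between `lo` and `hi`,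
integrating to `1`. -/
def IsDensity (lo hi : ℝ) (v : ℝ → ℝ) : Prop :=
  IntervalIntegrable v volume 0 1 ∧
  (∀ x ∈ Set.Icc (0:ℝ) 1, lo ≤ v x ∧ v x ≤ hi) ∧
  (∫ y in (0:ℝ)..1, v y) = 1

/-- Alice's round-`t` utility: if Bob picks `L` she gets `[a_t,1]`, else `[0,a_t]`. -/
noncomputable def uA (vA : ℝ → ℝ) (a : ℕ → ℝ) (b : ℕ → Choice) (t : ℕ) : ℝ :=
  if b t = Choice.L then 1 - cumul vA (a t) else cumul vA (a t)

/-- Bob's round-`t` utility: if he picks `L` he gets `[0,a_t]`, else `[a_t,1]`. -/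
noncomputable def uB (vB : ℝ → ℝ) (a : ℕ → ℝ) (b : ℕ → Choice) (t : ℕ) : ℝ :=
  if b t = Choice.L then cumul vB (a t) else 1 - cumul vB (a t)

/-- `α_t = r_t − ℓ_t`: number of `R` choices minus number of `L` choices up to round `t`. -/
noncomputable def alphaFP (b : ℕ → Choice) (t : ℕ) : ℝ :=
  ∑ i ∈ Finset.Icc 1 t, (if b i = Choice.R then (1:ℝ) else -1)

/-- `β_t = Σ_{i=1}^t (2 V_B(a_i) − 1)`. -/
noncomputable def betaFP (vB : ℝ → ℝ) (a : ℕ → ℝ) (t : ℕ) : ℝ :=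
  ∑ i ∈ Finset.Icc 1 t, (2 * cumul vB (a i) - 1)

/-- The radius `ρ_t = |α_t| + |β_t|`. -/
noncomputable def rhoFP (vB : ℝ → ℝ) (a : ℕ → ℝ) (b : ℕ → Choice) (t : ℕ) : ℝ :=
  |alphaFP b t| + |betaFP vB a t|

/-- `(a,b)` is a fictitious-play trajectory. -/
def IsFictitiousPlay (vB : ℝ → ℝ) (a : ℕ → ℝ) (b : ℕ → Choice) : Prop :=
  ∀ t : ℕ,
    (0 < alphaFP b t → a (t+1) = 1) ∧
    (alphaFP b t < 0 → a (t+1) = 0) ∧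
    (0 < betaFP vB a t → b (t+1) = Choice.L) ∧
    (betaFP vB a t < 0 → b (t+1) = Choice.R)

/-- Round `t` is axis-crossing. -/
def AxisCrossing (vB : ℝ → ℝ) (a : ℕ → ℝ) (b : ℕ → Choice) (t : ℕ) : Prop :=
  alphaFP b t = 0 ∨
  (betaFP vB a t ≤ 0 ∧ 0 < betaFP vB a (t+1)) ∨
  (0 ≤ betaFP vB a t ∧ betaFP vB a (t+1) < 0)


private lemma alphaFP_succ (b : ℕ → Choice) (s : ℕ) :
    alphaFP b (s+1) = alphaFP b s + (if b (s+1) = Choice.R then (1:ℝ) else -1) := by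
  unfold alphaFP
  exact Finset.sum_Icc_succ_top (by omega) _

private lemma betaFP_succ (vB : ℝ → ℝ) (a : ℕ → ℝ) (s : ℕ) :
    betaFP vB a (s+1) = betaFP vB a s + (2 * cumul vB (a (s+1)) - 1) := by
  unfold betaFP
  exact Finset.sum_Icc_succ_top (by omega) _

private lemma alphaFP_int (b : ℕ → Choice) (t : ℕ) : ∃ k : ℤ, alphaFP b t = (k : ℝ) := by
  induction t with
  | zero => exact ⟨0, by simp [alphaFP]⟩
  | succ s ih =>
    obtain ⟨k, hk⟩ := ih
    rw [alphaFP_succ, hk]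
    by_cases h : b (s+1) = Choice.R
    · exact ⟨k + 1, by rw [if_pos h]; push_cast; ring⟩
    · exact ⟨k - 1, by rw [if_neg h]; push_cast; ring⟩

private lemma cumul_bounds {δ Δ : ℝ} (hδ : 0 < δ) {vB : ℝ → ℝ} (hB : IsDensity δ Δ vB)
    {x : ℝ} (hx : x ∈ Set.Icc (0:ℝ) 1) : 0 ≤ cumul vB x ∧ cumul vB x ≤ 1 := by
  obtain ⟨hint, hbd, hone⟩ := hB
  have hsub : Set.uIcc (0:ℝ) x ⊆ Set.uIcc (0:ℝ) 1 :=
    Set.uIcc_subset_uIcc (by simp) (by rw [Set.uIcc_of_le (by norm_num : (0:ℝ) ≤ 1)]; exact hx)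
  have hsub2 : Set.uIcc x (1:ℝ) ⊆ Set.uIcc (0:ℝ) 1 :=
    Set.uIcc_subset_uIcc (by rw [Set.uIcc_of_le (by norm_num : (0:ℝ) ≤ 1)]; exact hx) (by simp)
  have h1 : IntervalIntegrable vB volume 0 x := hint.mono_set hsub
  have h2 : IntervalIntegrable vB volume x 1 := hint.mono_set hsub2
  have hn1 : 0 ≤ ∫ y in (0:ℝ)..x, vB y :=
    intervalIntegral.integral_nonneg hx.1
      (fun u hu => le_trans hδ.le (hbd u ⟨hu.1, hu.2.trans hx.2⟩).1)
  have hn2 : 0 ≤ ∫ y in x..(1:ℝ), vB y :=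
    intervalIntegral.integral_nonneg hx.2
      (fun u hu => le_trans hδ.le (hbd u ⟨hx.1.trans hu.1, hu.2⟩).1)
  have hsum : cumul vB x + ∫ y in x..(1:ℝ), vB y = 1 := by
    rw [cumul, intervalIntegral.integral_add_adjacent_intervals h1 h2]
    exact hone
  exact ⟨hn1, by linarith⟩

private lemma core_lemma (A B : ℕ → ℝ) (t τ : ℕ) (htτ : t < τ)
    (hAint : ∃ k : ℤ, A t = (k : ℝ))
    (hBt : 0 < B t) (hBni : ¬ ∃ k : ℤ, B t = (k : ℝ))
    (hA : ∀ s, t ≤ s → s < τ → A (s+1) = A s - 1)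
    (hBlb : ∀ s, t ≤ s → s < τ → B s - 1 ≤ B (s+1))
    (hBstep : ∀ s, t ≤ s → s < τ → 0 < A s → B s + 1 ≤ B (s+1))
    (hBτ : B τ ≤ 0) :
    (⌊|A t| + |B t|⌋ : ℝ) + 1 ≤ |A τ| + |B τ| := by
  obtain ⟨k, hk⟩ := hAint
  set m : ℤ := max k 0 with hm
  have key : ∀ j : ℕ, t + j ≤ τ →
      A (t + j) = A t - j ∧ B t + 2 * ((min m (j:ℤ) : ℤ) : ℝ) - j ≤ B (t + j) := by
    intro j
    induction j with
    | zero =>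
      intro _
      have h0 : min m (0:ℤ) = 0 := min_eq_right (le_max_right k 0)
      refine ⟨by simp, ?_⟩
      simp only [Nat.cast_zero, h0]
      simp
    | succ j ih =>
      intro hle
      have hsτ : t + j < τ := by omega
      obtain ⟨ihA, ihB⟩ := ih (by omega)
      have hA' := hA (t+j) (by omega) hsτ
      have hstep : t + (j+1) = (t+j) + 1 := by omega
      refine ⟨by rw [hstep, hA', ihA]; push_cast; ring, ?_⟩
      rw [hstep]
      by_cases hpos : 0 < A (t+j)
      · have hjk : (j:ℤ) < k := by
          have h0 : (0:ℝ) < (k:ℝ) - j := by rw [← hk]; rw [ihA] at hpos; linarith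
          exact_mod_cast (by linarith : (j:ℝ) < (k:ℝ))
        have hmin1 : min m (j:ℤ) = (j:ℤ) := min_eq_right (by omega)
        have hmin2 : min m ((j:ℕ)+1:ℤ) = ((j:ℕ)+1:ℤ) := min_eq_right (by omega)
        have := hBstep (t+j) (by omega) hsτ hpos
        rw [hmin1] at ihB
        push_cast [hmin2]
        push_cast at ihB
        linarith
      · have hjk : k ≤ (j:ℤ) := by
          have h0 : (k:ℝ) - j ≤ 0 := by rw [← hk]; rw [ihA] at hpos; linarith [hpos, le_of_not_gt hpos]
          exact_mod_cast (by linarith : (k:ℝ) ≤ (j:ℝ))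
        have hmin1 : min m (j:ℤ) = m := min_eq_left (by omega)
        have hmin2 : min m ((j:ℕ)+1:ℤ) = m := min_eq_left (by omega)
        have := hBlb (t+j) (by omega) hsτ
        rw [hmin1] at ihB
        push_cast [hmin2]
        push_cast at ihB
        linarith
  set n : ℕ := τ - t with hn
  have htn : t + n = τ := by omega
  obtain ⟨hAτ, hBτlb⟩ := key n (by omega)
  rw [htn] at hAτ hBτlb
  have hn1 : 1 ≤ n := by omega
  -- min m n = m
  have hmn : min m (n:ℤ) = m := by
    rcases le_or_gt m (n:ℤ) with h | h
    · exact min_eq_left h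
    · exfalso
      rw [min_eq_right h.le] at hBτlb
      push_cast at hBτlb
      have : (1:ℝ) ≤ (n:ℝ) := by exact_mod_cast hn1
      linarith
  rw [hmn] at hBτlb
  -- n > B t + 2m strictly, hence n ≥ 2m + ⌊B t⌋ + 1
  have hlt : B t + 2 * (m:ℝ) < (n:ℝ) := by
    rcases lt_or_eq_of_le (by linarith : B t + 2*(m:ℝ) ≤ (n:ℝ)) with h | h
    · exact h
    · exfalso; exact hBni ⟨(n:ℤ) - 2*m, by push_cast; linarith⟩
  have hfloor : ⌊B t⌋ < (n:ℤ) - 2*m := by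
    rw [Int.floor_lt]; push_cast; linarith
  have hfl0 : 0 ≤ ⌊B t⌋ := Int.floor_nonneg.mpr hBt.le
  -- A τ = k - n < 0
  have hkm : k ≤ m := le_max_left _ _
  have hAτval : A τ = (k:ℝ) - n := by rw [hAτ, hk]
  have hkn : (k:ℝ) - n < 0 := by
    have h1 : k < (n:ℤ) := by omega
    have h2 : (k:ℝ) < (n:ℝ) := by exact_mod_cast h1
    linarith
  have habsAτ : |A τ| = (n:ℝ) - k := by rw [hAτval, abs_of_neg hkn]; ring
  have habsAt : |A t| = |(k:ℤ)| := by rw [hk, ← Int.cast_abs]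
  have hfloort : ⌊|A t| + |B t|⌋ = |k| + ⌊B t⌋ := by
    rw [habsAt, abs_of_pos hBt, Int.floor_intCast_add]
  rw [hfloort, habsAτ]
  have hkey : |k| + ⌊B t⌋ + 1 ≤ (n:ℤ) - k := by
    have h1 : |k| ≤ 2*m - k := abs_le.mpr ⟨by omega, by omega⟩
    linarith
  have : ((|k| + ⌊B t⌋ + 1 : ℤ) : ℝ) ≤ (((n:ℤ) - k : ℤ) : ℝ) := Int.cast_le.mpr hkey
  push_cast at this ⊢
  have hB0 : 0 ≤ |B τ| := abs_nonneg _
  linarith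

/-- If `β_t` is not an integer and `τ > t` is the first round after `t`
with `β_t·β_τ ≤ 0`, then `ρ_τ ≥ ⌊ρ_t⌋ + 1`. -/
theorem fractional_beta_increases_radius
    (δ Δ : ℝ) (hδ : 0 < δ) (hδΔ : δ ≤ Δ)
    (vA vB : ℝ → ℝ) (hA : IsDensity δ Δ vA) (hB : IsDensity δ Δ vB)
    (a : ℕ → ℝ) (b : ℕ → Choice)
    (ha : ∀ t : ℕ, 1 ≤ t → a t ∈ Set.Icc (0:ℝ) 1)
    (hfp : IsFictitiousPlay vB a b)
    (t τ : ℕ)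
    (hβ : ¬ ∃ k : ℤ, betaFP vB a t = (k : ℝ))
    (hτgt : t < τ)
    (hsign : betaFP vB a t * betaFP vB a τ ≤ 0)
    (hfirst : ∀ s : ℕ, t < s → s < τ → 0 < betaFP vB a t * betaFP vB a s) :
    (⌊rhoFP vB a b t⌋ : ℝ) + 1 ≤ rhoFP vB a b τ := by
  have hβt0 : betaFP vB a t ≠ 0 := fun h => hβ ⟨0, by simp [h]⟩
  have hBmem : ∀ s : ℕ, t ≤ s → s < τ → a (s+1) ∈ Set.Icc (0:ℝ) 1 := fun s _ _ => ha (s+1) (by omega)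
  rcases lt_or_gt_of_ne hβt0 with hneg | hpos
  · -- β_t < 0 : apply core to -α, -β
    have hconc := core_lemma (fun s => -alphaFP b s) (fun s => -betaFP vB a s) t τ hτgt
      (by obtain ⟨k, hk⟩ := alphaFP_int b t; exact ⟨-k, by simp [hk]⟩)
      (by simpa using hneg)
      (by
        rintro ⟨k, hk⟩
        have hk' : -betaFP vB a t = (k:ℝ) := hk
        exact hβ ⟨-k, by push_cast; linarith⟩)
      (by
        intro s hts hsτ
        have hβs : betaFP vB a s < 0 := by
          rcases eq_or_lt_of_le hts with h | h
          · rw [← h]; exact hneg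
          · have := hfirst s h hsτ
            nlinarith
        have hbR : b (s+1) = Choice.R := (hfp s).2.2.2 hβs
        simp only [alphaFP_succ, hbR, if_pos]
        ring)
      (by
        intro s hts hsτ
        have hV := (cumul_bounds hδ hB (hBmem s hts hsτ)).2
        simp only [betaFP_succ]
        linarith)
      (by
        intro s hts hsτ hαs
        have hαs' : alphaFP b s < 0 := by simpa using hαs
        have ha0 : a (s+1) = 0 := (hfp s).2.1 hαs'
        have hc0 : cumul vB (a (s+1)) = 0 := by
          rw [ha0, cumul, intervalIntegral.integral_same]
        simp only [betaFP_succ, hc0]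
        linarith)
      (by
        have hβτ : 0 ≤ betaFP vB a τ := by nlinarith
        simpa using hβτ)
    simp only [abs_neg] at hconc
    exact hconc
  · -- β_t > 0 : apply core to α, β
    have hconc := core_lemma (alphaFP b) (betaFP vB a) t τ hτgt
      (alphaFP_int b t) hpos hβ
      (by
        intro s hts hsτ
        have hβs : 0 < betaFP vB a s := by
          rcases eq_or_lt_of_le hts with h | h
          · rw [← h]; exact hpos
          · have := hfirst s h hsτ
            nlinarith
        have hbL : b (s+1) = Choice.L := (hfp s).2.2.1 hβs
        have : b (s+1) ≠ Choice.R := by rw [hbL]; intro h; cases h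
        simp only [alphaFP_succ, this, if_neg, if_false]
        ring)
      (by
        intro s hts hsτ
        have hV := (cumul_bounds hδ hB (hBmem s hts hsτ)).1
        simp only [betaFP_succ]
        linarith)
      (by
        intro s hts hsτ hαs
        have ha1 : a (s+1) = 1 := (hfp s).1 hαs
        have hc1 : cumul vB (a (s+1)) = 1 := by rw [ha1]; exact hB.2.2
        simp only [betaFP_succ, hc1]
        linarith)
      (by nlinarith)
    exact hconc
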